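/- Let ω be a nonnegative integrable function on [0,1) with ŵ(r) = ∫_r^1 ω(s) ds > 0 for all r. Suppose there exist C' ≥ 1 and β > 0 with ŵ(r) ≤ C'·((1-r)/(1-t))^β·ŵ(t) for all 0 ≤ r ≤ t < 1. Then there exist constants c₁, c₂ > 0 such that c₁·ŵ(1 - 1/x) ≤ ∫_0^1 s^x ω(s) ds ≤ c₂·ŵ(1 - 1/x) for all x ∈ [1, ∞). -/

import Mathlib

open MeasureTheory Set

/-- The tail integral of a radial weight. -/
noncomputable def tl (ω : ℝ → ℝ) (r : ℝ) : ℝ := ∫ s in r..1, ω s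

namespace Stmt1Aux

lemma ne_one_ae : ∀ᵐ s : ℝ, s ≠ 1 := by
  have h : volume ({1} : Set ℝ) = 0 := measure_singleton 1
  rw [ae_iff]; simpa using h

lemma integrableOn_of_bdd {f : ℝ → ℝ} {S : Set ℝ}
    (hS : MeasurableSet S) (hfin : volume S < ⊤)
    (hf : AEStronglyMeasurable f (volume.restrict S)) {M : ℝ}
    (hM : ∀ u ∈ S, |f u| ≤ M) : IntegrableOn f S volume := by
  refine Integrable.mono' (g := fun _ => M) (integrableOn_const hfin.ne) hf ?_
  filter_upwards [ae_restrict_mem hS] with u hu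
  simpa using hM u hu

lemma exp_rpow_integrable {c β : ℝ} (hc : 1 ≤ c) (hβ : 0 < β) :
    IntegrableOn (fun v => Real.exp (-(c*v)) * v ^ β) (Ioi (0:ℝ)) := by
  have h : IntegrableOn (fun v : ℝ => Real.exp (-v) * v ^ β) (Ioi (0:ℝ)) := by
    have := Real.GammaIntegral_convergent (by linarith : (0:ℝ) < β + 1)
    simpa using this
  refine Integrable.mono' h (Measurable.aestronglyMeasurable (by fun_prop)) ?_
  filter_upwards [ae_restrict_mem measurableSet_Ioi] with v hv
  have hv0 : (0:ℝ) < v := hv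
  rw [Real.norm_eq_abs, abs_of_nonneg (by positivity)]
  have : Real.exp (-(c*v)) ≤ Real.exp (-v) := by
    apply Real.exp_le_exp.2; nlinarith
  exact mul_le_mul_of_nonneg_right this (by positivity)

lemma gamma_scaled {c β : ℝ} (hc : 0 < c) (hβ : 0 < β) :
    (∫ v in Ioi (0:ℝ), Real.exp (-(c*v)) * v ^ β) = Real.Gamma (β+1) / c ^ (β+1) := by
  have h1 := MeasureTheory.integral_comp_mul_left_Ioi
    (fun w => Real.exp (-w) * w ^ β) 0 hc
  rw [mul_zero] at h1
  have h2 : (∫ v in Ioi (0:ℝ), Real.exp (-(c*v)) * (c*v) ^ β)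
      = c ^ β * ∫ v in Ioi (0:ℝ), Real.exp (-(c*v)) * v ^ β := by
    rw [← integral_const_mul]
    refine setIntegral_congr_fun measurableSet_Ioi (fun v hv => ?_)
    have hv0 : (0:ℝ) < v := hv
    rw [Real.mul_rpow hc.le hv0.le]; ring
  have h3 : (∫ w in Ioi (0:ℝ), Real.exp (-w) * w ^ β) = Real.Gamma (β+1) := by
    rw [Real.Gamma_eq_integral (by linarith : (0:ℝ) < β + 1)]
    simp
  rw [h2, h3] at h1
  have hcb : (0:ℝ) < c ^ β := Real.rpow_pos_of_pos hc β
  have hcb1 : c ^ (β+1) = c ^ β * c := by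
    rw [Real.rpow_add_one hc.ne' β]
  rw [hcb1]
  rw [smul_eq_mul] at h1
  field_simp at h1 ⊢
  linarith [h1]

lemma intIntble_bdd {f : ℝ → ℝ} (hf : Measurable f) {M : ℝ}
    (hM : ∀ u ∈ Ioc (0:ℝ) 1, |f u| ≤ M) : IntervalIntegrable f volume 0 1 := by
  rw [intervalIntegrable_iff_integrableOn_Ioc_of_le zero_le_one]
  refine Integrable.mono' (g := fun _ => M)
    (integrableOn_const (by simp)) hf.aestronglyMeasurable ?_
  filter_upwards [ae_restrict_mem measurableSet_Ioc] with u hu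
  simpa using hM u hu

lemma J_bound {x β : ℝ} (hx : 1 ≤ x) (hβ : 0 < β) :
    x ^ (β+1) * (∫ u in (0:ℝ)..1, u ^ (x-1) * (1-u) ^ β)
      ≤ 2 ^ (β+1) * (Real.Gamma (β+1) + 1) := by
  have hx0 : (0:ℝ) < x := lt_of_lt_of_le one_pos hx
  have hΓ : 0 < Real.Gamma (β+1) := Real.Gamma_pos_of_pos (by linarith)
  have hI1 : IntervalIntegrable (fun u : ℝ => u ^ (x-1) * (1-u) ^ β) volume 0 1 := by
    refine intIntble_bdd (by fun_prop) (M := 1) (fun u hu => ?_)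
    have h1 : u ^ (x-1) ≤ 1 := Real.rpow_le_one hu.1.le hu.2 (by linarith)
    have h2 : (1-u) ^ β ≤ 1 := Real.rpow_le_one (by linarith [hu.2]) (by linarith [hu.1]) hβ.le
    have h3 : (0:ℝ) ≤ u ^ (x-1) := Real.rpow_nonneg hu.1.le _
    have h4 : (0:ℝ) ≤ (1-u) ^ β := Real.rpow_nonneg (by linarith [hu.2]) _
    rw [abs_of_nonneg (mul_nonneg h3 h4)]
    nlinarith
  have hJ0 : 0 ≤ ∫ u in (0:ℝ)..1, u ^ (x-1) * (1-u) ^ β :=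
    intervalIntegral.integral_nonneg zero_le_one (fun u hu =>
      mul_nonneg (Real.rpow_nonneg hu.1 _) (Real.rpow_nonneg (by linarith [hu.2]) _))
  rcases le_or_gt x 2 with hx2 | hx2
  · have hJ1 : (∫ u in (0:ℝ)..1, u ^ (x-1) * (1-u) ^ β) ≤ 1 := by
      have hle : (∫ u in (0:ℝ)..1, u ^ (x-1) * (1-u) ^ β) ≤ ∫ _u in (0:ℝ)..1, (1:ℝ) := by
        refine intervalIntegral.integral_mono_on zero_le_one hI1 intervalIntegrable_const
          (fun u hu => ?_)
        have h1 : u ^ (x-1) ≤ 1 := Real.rpow_le_one hu.1 hu.2 (by linarith)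
        have h2 : (1-u) ^ β ≤ 1 := Real.rpow_le_one (by linarith [hu.2]) (by linarith [hu.1]) hβ.le
        have h3 : (0:ℝ) ≤ u ^ (x-1) := Real.rpow_nonneg hu.1 _
        have h4 : (0:ℝ) ≤ (1-u) ^ β := Real.rpow_nonneg (by linarith [hu.2]) _
        nlinarith
      simpa using hle
    have hxb : x ^ (β+1) ≤ 2 ^ (β+1) := Real.rpow_le_rpow hx0.le hx2 (by linarith)
    have h2p : (0:ℝ) < 2 ^ (β+1) := Real.rpow_pos_of_pos two_pos _
    have hxp : (0:ℝ) < x ^ (β+1) := Real.rpow_pos_of_pos hx0 _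
    nlinarith
  · set c := x - 1 with hc
    have hc1 : 1 ≤ c := by simp only [hc]; linarith
    have hc0 : 0 < c := by linarith
    have hIoi := exp_rpow_integrable hc1 hβ
    have hI2' : IntervalIntegrable (fun u : ℝ => Real.exp (-(c*(1-u))) * (1-u) ^ β) volume 0 1 := by
      refine intIntble_bdd (by fun_prop) (M := 1) (fun u hu => ?_)
      have h1 : Real.exp (-(c*(1-u))) ≤ 1 := by
        rw [Real.exp_le_one_iff]
        nlinarith [hu.2]
      have h2 : (1-u) ^ β ≤ 1 := Real.rpow_le_one (by linarith [hu.2]) (by linarith [hu.1]) hβ.le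
      have h4 : (0:ℝ) ≤ (1-u) ^ β := Real.rpow_nonneg (by linarith [hu.2]) _
      rw [abs_of_nonneg (mul_nonneg (Real.exp_pos _).le h4)]
      nlinarith [Real.exp_pos (-(c*(1-u)))]
    have hmono : (∫ u in (0:ℝ)..1, u ^ (x-1) * (1-u) ^ β)
        ≤ ∫ u in (0:ℝ)..1, Real.exp (-(c*(1-u))) * (1-u) ^ β := by
      refine intervalIntegral.integral_mono_on zero_le_one hI1 hI2' (fun u hu => ?_)
      refine mul_le_mul_of_nonneg_right ?_ (Real.rpow_nonneg (by linarith [hu.2]) β)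
      rcases eq_or_lt_of_le hu.1 with h0 | h0
      · rw [← h0, Real.zero_rpow (by intro hh; rw [sub_eq_zero] at hh; exact (by linarith : (1:ℝ) < x).ne' hh)]
        positivity
      · rw [Real.rpow_def_of_pos h0]
        apply Real.exp_le_exp.2
        have := Real.log_le_sub_one_of_pos h0
        nlinarith [hu.2]
    have hsubs : (∫ u in (0:ℝ)..1, Real.exp (-(c*(1-u))) * (1-u) ^ β)
        = ∫ v in (0:ℝ)..1, Real.exp (-(c*v)) * v ^ β := by
      have h := intervalIntegral.integral_comp_sub_left (a := 0) (b := 1)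
        (fun v => Real.exp (-(c*v)) * v ^ β) 1
      simpa using h
    have hIoiB : (∫ v in (0:ℝ)..1, Real.exp (-(c*v)) * v ^ β)
        ≤ Real.Gamma (β+1) / c ^ (β+1) := by
      rw [intervalIntegral.integral_of_le zero_le_one, ← gamma_scaled hc0 hβ]
      refine setIntegral_mono_set hIoi ?_ (HasSubset.Subset.eventuallyLE Ioc_subset_Ioi_self)
      filter_upwards [ae_restrict_mem measurableSet_Ioi] with v hv
      have hv0 : (0:ℝ) < v := hv
      positivity
    have hfrac : x ^ (β+1) / c ^ (β+1) ≤ 2 ^ (β+1) := by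
      rw [← Real.div_rpow hx0.le hc0.le]
      refine Real.rpow_le_rpow (by positivity) ?_ (by linarith)
      rw [div_le_iff₀ hc0]
      simp only [hc]; linarith
    have hcpow : 0 < c ^ (β+1) := Real.rpow_pos_of_pos hc0 _
    have hxpow : 0 < x ^ (β+1) := Real.rpow_pos_of_pos hx0 _
    have h2p : (0:ℝ) < 2 ^ (β+1) := Real.rpow_pos_of_pos two_pos _
    calc x ^ (β+1) * (∫ u in (0:ℝ)..1, u ^ (x-1) * (1-u) ^ β)
        ≤ x ^ (β+1) * (Real.Gamma (β+1) / c ^ (β+1)) := by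
          refine mul_le_mul_of_nonneg_left ?_ hxpow.le
          calc (∫ u in (0:ℝ)..1, u ^ (x-1) * (1-u) ^ β)
              ≤ ∫ u in (0:ℝ)..1, Real.exp (-(c*(1-u))) * (1-u) ^ β := hmono
            _ = ∫ v in (0:ℝ)..1, Real.exp (-(c*v)) * v ^ β := hsubs
            _ ≤ Real.Gamma (β+1) / c ^ (β+1) := hIoiB
      _ = (x ^ (β+1) / c ^ (β+1)) * Real.Gamma (β+1) := by ring
      _ ≤ 2 ^ (β+1) * Real.Gamma (β+1) := mul_le_mul_of_nonneg_right hfrac hΓ.le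
      _ ≤ 2 ^ (β+1) * (Real.Gamma (β+1) + 1) := by nlinarith


section
variable {ω : ℝ → ℝ} (hint : IntegrableOn ω (Ico (0:ℝ) 1))
include hint

lemma hIcc : IntegrableOn ω (Icc (0:ℝ) 1) := (integrableOn_Icc_iff_integrableOn_Ico (by simp)).2 hint

lemma hsub {a b : ℝ} (ha : 0 ≤ a) (hab : a ≤ b) (hb : b ≤ 1) :
    IntervalIntegrable ω volume a b := by
  refine IntegrableOn.intervalIntegrable ?_
  rw [uIcc_of_le hab]
  exact (hIcc hint).mono_set (Icc_subset_Icc ha hb)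

lemma tl_cont : ContinuousOn (tl ω) (Icc 0 1) := by
  have h := intervalIntegral.continuousOn_primitive_interval_left (μ := volume) (f := ω)
    (a := 0) (b := 1) (by rw [uIcc_of_le zero_le_one]; exact hIcc hint)
  rw [uIcc_of_le zero_le_one] at h
  exact h

omit hint in
lemma tl_nonneg_int (hnn : ∀ t ∈ Ico (0:ℝ) 1, 0 ≤ ω t) {a b : ℝ} (ha : 0 ≤ a) (hab : a ≤ b)
    (hb : b ≤ 1) : 0 ≤ ∫ s in a..b, ω s := by
  apply intervalIntegral.integral_nonneg_of_ae_restrict hab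
  filter_upwards [ae_restrict_mem measurableSet_Icc, ae_restrict_of_ae ne_one_ae] with s hs hs1
  exact hnn s ⟨le_trans ha hs.1, lt_of_le_of_ne (le_trans hs.2 hb) hs1⟩

lemma tl_anti (hnn : ∀ t ∈ Ico (0:ℝ) 1, 0 ≤ ω t) {u v : ℝ} (hu : 0 ≤ u) (huv : u ≤ v)
    (hv : v ≤ 1) : tl ω v ≤ tl ω u := by
  have h1 : IntervalIntegrable ω volume u v := hsub hint hu huv hv
  have h2 : IntervalIntegrable ω volume v 1 := hsub hint (hu.trans huv) hv le_rfl
  have hs : tl ω u = (∫ s in u..v, ω s) + tl ω v :=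
    (intervalIntegral.integral_add_adjacent_intervals h1 h2).symm
  have := tl_nonneg_int hnn hu huv hv
  rw [hs]; linarith

lemma pow_mul_intble {x : ℝ} (hx : 0 ≤ x) {a b : ℝ} (ha : 0 ≤ a) (hab : a ≤ b) (hb : b ≤ 1) :
    IntervalIntegrable (fun s => s ^ x * ω s) volume a b := by
  rw [intervalIntegrable_iff_integrableOn_Ioc_of_le hab]
  have hω : IntegrableOn ω (Ioc a b) :=
    (hIcc hint).mono_set ((Ioc_subset_Icc_self).trans (Icc_subset_Icc ha hb))
  refine Integrable.mono' (g := fun s => |ω s|) hω.abs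
    (((by fun_prop : Measurable fun s : ℝ => s ^ x)).aestronglyMeasurable.mul
      hω.aestronglyMeasurable) ?_
  filter_upwards [ae_restrict_mem measurableSet_Ioc] with s hs
  have h1 : (0:ℝ) ≤ s := le_trans ha hs.1.le
  have : s ^ x ≤ 1 := Real.rpow_le_one h1 (hs.2.trans hb) hx
  rw [Real.norm_eq_abs, abs_mul, abs_of_nonneg (Real.rpow_nonneg h1 x)]
  calc s ^ x * |ω s| ≤ 1 * |ω s| :=
        mul_le_mul_of_nonneg_right this (abs_nonneg _)
    _ = |ω s| := one_mul _

lemma fubini {x : ℝ} (hx : 1 ≤ x) :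
    (∫ s in (0:ℝ)..1, s ^ x * ω s) = ∫ u in (0:ℝ)..1, x * u ^ (x-1) * tl ω u := by
  have hx0 : (0:ℝ) < x := lt_of_lt_of_le one_pos hx
  have hfin : volume (Ioo (0:ℝ) 1) < ⊤ := by simp [Real.volume_Ioo]
  have hωIoo : IntegrableOn ω (Ioo (0:ℝ) 1) := hint.mono_set Ioo_subset_Ico_self
  set μ : Measure ℝ := volume.restrict (Ioo 0 1) with hμ
  set f : ℝ → ℝ → ℝ := fun u s => if u < s then x * u ^ (x-1) * ω s else 0 with hf
  have hmeas_pow : Measurable fun u : ℝ => x * u ^ (x-1) := by fun_prop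
  have hpow_int : Integrable (fun u : ℝ => x * u ^ (x-1)) μ := by
    refine integrableOn_of_bdd measurableSet_Ioo hfin hmeas_pow.aestronglyMeasurable
      (M := x) ?_
    intro u hu
    rw [abs_of_nonneg (mul_nonneg hx0.le (Real.rpow_nonneg hu.1.le _))]
    have h1 : u ^ (x-1) ≤ 1 := Real.rpow_le_one hu.1.le hu.2.le (by linarith)
    nlinarith
  have hset : MeasurableSet {p : ℝ × ℝ | p.1 < p.2} :=
    measurableSet_lt measurable_fst measurable_snd
  have huncurry : Function.uncurry f = ({p : ℝ × ℝ | p.1 < p.2}).indicator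
      (fun p => (x * p.1 ^ (x-1)) * ω p.2) := by
    funext p
    simp only [Function.uncurry, hf, indicator, mem_setOf_eq]
  have hfint : Integrable (Function.uncurry f) (μ.prod μ) := by
    rw [huncurry]; exact (hpow_int.mul_prod hωIoo).indicator hset
  have hswap := integral_integral_swap hfint
  have hL : ∀ u ∈ Ioo (0:ℝ) 1, (∫ s, f u s ∂μ) = x * u ^ (x-1) * tl ω u := by
    intro u hu
    have h1 : (fun s => f u s) = (Ioi u).indicator (fun s => x * u ^ (x-1) * ω s) := by
      funext s
      simp only [hf, indicator, mem_Ioi]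
    have h2 : Ioi u ∩ Ioo 0 1 = Ioo u 1 := by
      ext s
      simp only [mem_inter_iff, mem_Ioi, mem_Ioo]
      exact ⟨fun h' => ⟨h'.1, h'.2.2⟩, fun h' => ⟨h'.1, hu.1.trans h'.1, h'.2⟩⟩
    rw [hμ, h1, integral_indicator measurableSet_Ioi,
      Measure.restrict_restrict measurableSet_Ioi, h2, integral_const_mul]
    congr 1
    rw [tl, intervalIntegral.integral_of_le hu.2.le, integral_Ioc_eq_integral_Ioo]
  have hR : ∀ s ∈ Ioo (0:ℝ) 1, (∫ u, f u s ∂μ) = s ^ x * ω s := by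
    intro s hs
    have h1 : (fun u => f u s) = (Iio s).indicator (fun u => (x * u ^ (x-1)) * ω s) := by
      funext u
      simp only [hf, indicator, mem_Iio]
    have h2 : Iio s ∩ Ioo 0 1 = Ioo 0 s := by
      ext u
      simp only [mem_inter_iff, mem_Iio, mem_Ioo]
      exact ⟨fun h' => ⟨h'.2.1, h'.1⟩, fun h' => ⟨h'.2, h'.1, h'.2.trans hs.2⟩⟩
    have h3 : (∫ u in Ioo (0:ℝ) s, x * u ^ (x-1)) = s ^ x := by
      rw [← integral_Ioc_eq_integral_Ioo, ← intervalIntegral.integral_of_le hs.1.le,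
        intervalIntegral.integral_const_mul,
        integral_rpow (Or.inl (by linarith : (-1:ℝ) < x - 1)),
        sub_add_cancel, Real.zero_rpow hx0.ne', sub_zero]
      field_simp
    rw [hμ, h1, integral_indicator measurableSet_Iio,
      Measure.restrict_restrict measurableSet_Iio, h2, integral_mul_const, h3]
  have e1 : (∫ s in (0:ℝ)..1, s ^ x * ω s) = ∫ s, s ^ x * ω s ∂μ := by
    rw [intervalIntegral.integral_of_le zero_le_one, hμ, integral_Ioc_eq_integral_Ioo]
  have e2 : (∫ u in (0:ℝ)..1, x * u ^ (x-1) * tl ω u) = ∫ u, x * u ^ (x-1) * tl ω u ∂μ := by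
    rw [intervalIntegral.integral_of_le zero_le_one, hμ, integral_Ioc_eq_integral_Ioo]
  rw [e1, e2]
  calc ∫ s, s ^ x * ω s ∂μ
      = ∫ s, (∫ u, f u s ∂μ) ∂μ :=
        setIntegral_congr_fun measurableSet_Ioo (fun s hs => (hR s hs).symm)
    _ = ∫ u, (∫ s, f u s ∂μ) ∂μ := hswap.symm
    _ = ∫ u, x * u ^ (x-1) * tl ω u ∂μ :=
        setIntegral_congr_fun measurableSet_Ioo (fun u hu => hL u hu)
end
end Stmt1Aux

open Stmt1Aux in
set_option maxHeartbeats 1000000 in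
theorem stmt1 (ω : ℝ → ℝ)
    (hnn : ∀ t ∈ Ico (0:ℝ) 1, 0 ≤ ω t)
    (hint : IntegrableOn ω (Ico (0:ℝ) 1))
    (hpos : ∀ r ∈ Ico (0:ℝ) 1, 0 < tl ω r)
    (C' : ℝ) (hC' : 1 ≤ C') (β : ℝ) (hβ : 0 < β)
    (h : ∀ r t : ℝ, 0 ≤ r → r ≤ t → t < 1 →
      tl ω r ≤ C' * ((1 - r) / (1 - t)) ^ β * tl ω t) :
    ∃ c₁ > (0:ℝ), ∃ c₂ > (0:ℝ), ∀ x : ℝ, 1 ≤ x →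
      c₁ * tl ω (1 - 1/x) ≤ (∫ s in (0:ℝ)..1, s ^ x * ω s) ∧
      (∫ s in (0:ℝ)..1, s ^ x * ω s) ≤ c₂ * tl ω (1 - 1/x) := by
  have hC0 : (0:ℝ) < C' := lt_of_lt_of_le one_pos hC'
  have h2β : (0:ℝ) < 2 ^ β := Real.rpow_pos_of_pos two_pos β
  refine ⟨1 / (2 * (C' * 2 ^ β)), by positivity,
    C' * (2 ^ (β+1) * (Real.Gamma (β+1) + 1) + 1), by
      have := Real.Gamma_pos_of_pos (by linarith : (0:ℝ) < β + 1)
      positivity, ?_⟩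
  intro x hx
  have hx0 : (0:ℝ) < x := lt_of_lt_of_le one_pos hx
  have hinvx : 0 < 1/x := by positivity
  have hinvx1 : 1/x ≤ 1 := by rw [div_le_one hx0]; exact hx
  set a : ℝ := 1 - 1/x with ha_def
  have ha0 : 0 ≤ a := by simp only [ha_def]; linarith
  have ha1 : a < 1 := by simp only [ha_def]; linarith
  have hW : 0 < tl ω a := hpos a ⟨ha0, ha1⟩
  constructor
  · -- lower bound
    set b : ℝ := 1 - 1/(2*x) with hb_def
    have hb0 : 0 ≤ b := by
      have : 1/(2*x) ≤ 1/2 := by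
        apply div_le_div_of_nonneg_left one_pos.le two_pos; linarith
      simp only [hb_def]; linarith
    have hb1 : b < 1 := by
      have : 0 < 1/(2*x) := by positivity
      simp only [hb_def]; linarith
    have hab : a ≤ b := by
      have : 1/(2*x) ≤ 1/x := by
        apply div_le_div_of_nonneg_left one_pos.le hx0; linarith
      simp only [ha_def, hb_def]; linarith
    -- doubling : tl a ≤ C' * 2^β * tl b
    have hdbl : tl ω a ≤ C' * 2 ^ β * tl ω b := by
      have := h a b ha0 hab hb1
      have he : (1 - a) / (1 - b) = 2 := by
        simp only [ha_def, hb_def]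
        field_simp
        ring
      rwa [he] at this
    -- ∫_b^1 s^x ω ≥ b^x tl b
    have hIb : IntervalIntegrable (fun s => s ^ x * ω s) volume b 1 :=
      pow_mul_intble hint hx0.le hb0 hb1.le le_rfl
    have hIc : IntervalIntegrable (fun s => b ^ x * ω s) volume b 1 :=
      (hsub hint hb0 hb1.le le_rfl).const_mul _
    have hmono : b ^ x * tl ω b ≤ ∫ s in b..1, s ^ x * ω s := by
      have : (∫ s in b..1, b ^ x * ω s) ≤ ∫ s in b..1, s ^ x * ω s := by
        apply intervalIntegral.integral_mono_ae_restrict hb1.le hIc hIb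
        filter_upwards [ae_restrict_mem measurableSet_Icc, ae_restrict_of_ae ne_one_ae]
          with s hs hs1
        have hsIco : s ∈ Ico (0:ℝ) 1 := ⟨le_trans hb0 hs.1, lt_of_le_of_ne hs.2 hs1⟩
        exact mul_le_mul_of_nonneg_right
          (Real.rpow_le_rpow hb0 hs.1 hx0.le) (hnn s hsIco)
      calc b ^ x * tl ω b = ∫ s in b..1, b ^ x * ω s := by
            rw [tl, intervalIntegral.integral_const_mul]
        _ ≤ _ := this
    -- ∫_0^1 ≥ ∫_b^1
    have hsplit : (∫ s in (0:ℝ)..1, s ^ x * ω s)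
        = (∫ s in (0:ℝ)..b, s ^ x * ω s) + ∫ s in b..1, s ^ x * ω s :=
      (intervalIntegral.integral_add_adjacent_intervals
        (pow_mul_intble hint hx0.le le_rfl hb0 hb1.le) hIb).symm
    have hfirst : 0 ≤ ∫ s in (0:ℝ)..b, s ^ x * ω s := by
      apply intervalIntegral.integral_nonneg hb0
      intro u hu
      exact mul_nonneg (Real.rpow_nonneg hu.1 x)
        (hnn u ⟨hu.1, lt_of_le_of_lt hu.2 hb1⟩)
    -- b^x ≥ 1/2 (Bernoulli)
    have hbern : (1:ℝ)/2 ≤ b ^ x := by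
      have hs : (-1:ℝ) ≤ -(1/(2*x)) := by
        have : 1/(2*x) ≤ 1/2 := by
          apply div_le_div_of_nonneg_left one_pos.le two_pos; linarith
        linarith
      have := one_add_mul_self_le_rpow_one_add hs hx
      have he : 1 + x * -(1/(2*x)) = 1/2 := by field_simp; ring
      have he2 : (1:ℝ) + -(1/(2*x)) = b := by simp only [hb_def]; ring
      rw [he, he2] at this
      exact this
    have htlb : 0 ≤ tl ω b := (hpos b ⟨hb0, hb1⟩).le
    have key : tl ω a / (2 * (C' * 2 ^ β)) ≤ b ^ x * tl ω b := by
      rw [div_le_iff₀ (by positivity)]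
      calc tl ω a ≤ C' * 2 ^ β * tl ω b := hdbl
        _ ≤ (b ^ x * tl ω b) * (2 * (C' * 2 ^ β)) := by
            have h1 : C' * 2 ^ β * tl ω b = ((1/2) * tl ω b) * (2 * (C' * 2 ^ β)) := by ring
            rw [h1]
            apply mul_le_mul_of_nonneg_right _ (by positivity)
            exact mul_le_mul_of_nonneg_right hbern htlb
    calc 1 / (2 * (C' * 2 ^ β)) * tl ω a = tl ω a / (2 * (C' * 2 ^ β)) := by ring
      _ ≤ b ^ x * tl ω b := key
      _ ≤ ∫ s in b..1, s ^ x * ω s := hmono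
      _ ≤ _ := by rw [hsplit]; linarith
  · -- upper bound
    have hΓ : 0 < Real.Gamma (β+1) := Real.Gamma_pos_of_pos (by linarith)
    have hfub := fubini hint hx
    set W := tl ω a with hW_def
    have hCW : 0 < C' * W := mul_pos hC0 hW
    have htlm : AEStronglyMeasurable (tl ω) (volume.restrict (Ioc (0:ℝ) 1)) :=
      ((tl_cont hint).aestronglyMeasurable measurableSet_Icc).mono_measure
        (Measure.restrict_mono Ioc_subset_Icc_self le_rfl)
    have hA : IntervalIntegrable (fun u => x * u ^ (x-1) * tl ω u) volume 0 1 := by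
      rw [intervalIntegrable_iff_integrableOn_Ioc_of_le zero_le_one]
      refine integrableOn_of_bdd measurableSet_Ioc (by simp)
        (((by fun_prop : Measurable fun u : ℝ => x * u ^ (x-1)).aestronglyMeasurable).mul htlm)
        (M := x * tl ω 0) ?_
      intro u hu
      have h0u : (0:ℝ) ≤ tl ω u := tl_nonneg_int hnn hu.1.le hu.2 le_rfl
      have h1u : tl ω u ≤ tl ω 0 := tl_anti hint hnn le_rfl hu.1.le hu.2
      have hpow : u ^ (x-1) ≤ 1 := Real.rpow_le_one hu.1.le hu.2 (by linarith)
      have hpow0 : (0:ℝ) ≤ u ^ (x-1) := Real.rpow_nonneg hu.1.le _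
      rw [abs_of_nonneg (mul_nonneg (mul_nonneg hx0.le hpow0) h0u)]
      calc x * u ^ (x-1) * tl ω u
          ≤ x * 1 * tl ω u :=
            mul_le_mul_of_nonneg_right (mul_le_mul_of_nonneg_left hpow hx0.le) h0u
        _ = x * tl ω u := by ring
        _ ≤ x * tl ω 0 := mul_le_mul_of_nonneg_left h1u hx0.le
    have hB : IntervalIntegrable
        (fun u => x * u ^ (x-1) * (C' * W * ((x*(1-u)) ^ β + 1))) volume 0 1 := by
      refine intIntble_bdd (by fun_prop) (M := x * (C' * W * (x ^ β + 1))) ?_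
      intro u hu
      have hpow : u ^ (x-1) ≤ 1 := Real.rpow_le_one hu.1.le hu.2 (by linarith)
      have hpow0 : (0:ℝ) ≤ u ^ (x-1) := Real.rpow_nonneg hu.1.le _
      have hAb : (x*(1-u)) ^ β ≤ x ^ β :=
        Real.rpow_le_rpow (by nlinarith [hu.2]) (by nlinarith [hu.1.le]) hβ.le
      have hAb0 : (0:ℝ) ≤ (x*(1-u)) ^ β := Real.rpow_nonneg (by nlinarith [hu.2]) _
      have hR0 : (0:ℝ) ≤ C' * W * ((x*(1-u)) ^ β + 1) := mul_nonneg hCW.le (by linarith)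
      rw [abs_of_nonneg (mul_nonneg (mul_nonneg hx0.le hpow0) hR0)]
      calc x * u ^ (x-1) * (C' * W * ((x*(1-u)) ^ β + 1))
          ≤ x * 1 * (C' * W * ((x*(1-u)) ^ β + 1)) :=
            mul_le_mul_of_nonneg_right (mul_le_mul_of_nonneg_left hpow hx0.le) hR0
        _ = x * (C' * W * ((x*(1-u)) ^ β + 1)) := by ring
        _ ≤ x * (C' * W * (x ^ β + 1)) :=
            mul_le_mul_of_nonneg_left
              (mul_le_mul_of_nonneg_left (by linarith) hCW.le) hx0.le
    have hpt : ∀ u ∈ Icc (0:ℝ) 1, x * u ^ (x-1) * tl ω u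
        ≤ x * u ^ (x-1) * (C' * W * ((x*(1-u)) ^ β + 1)) := by
      intro u hu
      have hfac : (0:ℝ) ≤ x * u ^ (x-1) := mul_nonneg hx0.le (Real.rpow_nonneg hu.1 _)
      refine mul_le_mul_of_nonneg_left ?_ hfac
      have hA0 : (0:ℝ) ≤ (x*(1-u)) ^ β := Real.rpow_nonneg (by nlinarith [hu.2]) _
      rcases lt_or_ge u 1 with hu1 | hu1
      · rcases le_or_gt a u with hau | hua
        · have h1 : tl ω u ≤ W := tl_anti hint hnn ha0 hau hu1.le
          nlinarith [mul_nonneg hCW.le hA0, hCW, hW, hC']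
        · have h1 := h u a hu.1 hua.le ha1
          have he : (1 - u) / (1 - a) = x * (1-u) := by
            have h2 : 1 - a = 1/x := by simp only [ha_def]; ring
            rw [h2]; field_simp
          rw [he] at h1
          nlinarith [hCW]
      · have hu1' : u = 1 := le_antisymm hu.2 hu1
        rw [hu1']
        have h2 : tl ω 1 = 0 := intervalIntegral.integral_same
        rw [h2]
        have h3 : (0:ℝ) ≤ (x*(1-(1:ℝ))) ^ β := Real.rpow_nonneg (by norm_num) _
        exact mul_nonneg hCW.le (by linarith)
    have hle1 := intervalIntegral.integral_mono_on zero_le_one hA hB hpt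
    have hEq : EqOn (fun u => x * u ^ (x-1) * (C' * W * ((x*(1-u)) ^ β + 1)))
        (fun u => C' * W * (x ^ (β+1) * (u ^ (x-1) * (1-u) ^ β) + x * u ^ (x-1)))
        (uIcc (0:ℝ) 1) := by
      intro u hu
      rw [uIcc_of_le zero_le_one] at hu
      have h2 : (x*(1-u)) ^ β = x ^ β * (1-u) ^ β :=
        Real.mul_rpow hx0.le (by linarith [hu.2])
      simp only
      rw [h2, Real.rpow_add_one hx0.ne' β]
      ring
    rw [intervalIntegral.integral_congr hEq] at hle1
    have hI2 : IntervalIntegrable (fun u : ℝ => u ^ (x-1) * (1-u) ^ β) volume 0 1 := by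
      refine intIntble_bdd (by fun_prop) (M := 1) (fun u hu => ?_)
      have h1 : u ^ (x-1) ≤ 1 := Real.rpow_le_one hu.1.le hu.2 (by linarith)
      have h2 : (1-u) ^ β ≤ 1 := Real.rpow_le_one (by linarith [hu.2]) (by linarith [hu.1]) hβ.le
      have h3 : (0:ℝ) ≤ u ^ (x-1) := Real.rpow_nonneg hu.1.le _
      have h4 : (0:ℝ) ≤ (1-u) ^ β := Real.rpow_nonneg (by linarith [hu.2]) _
      rw [abs_of_nonneg (mul_nonneg h3 h4)]
      nlinarith
    have hI3 : IntervalIntegrable (fun u : ℝ => x * u ^ (x-1)) volume 0 1 := by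
      refine intIntble_bdd (by fun_prop) (M := x) (fun u hu => ?_)
      have h1 : u ^ (x-1) ≤ 1 := Real.rpow_le_one hu.1.le hu.2 (by linarith)
      have h3 : (0:ℝ) ≤ u ^ (x-1) := Real.rpow_nonneg hu.1.le _
      rw [abs_of_nonneg (mul_nonneg hx0.le h3)]
      nlinarith
    have hval : (∫ u in (0:ℝ)..1, C' * W * (x ^ (β+1) * (u ^ (x-1) * (1-u) ^ β) + x * u ^ (x-1)))
        = C' * W * (x ^ (β+1) * (∫ u in (0:ℝ)..1, u ^ (x-1) * (1-u) ^ β)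
            + ∫ u in (0:ℝ)..1, x * u ^ (x-1)) := by
      rw [intervalIntegral.integral_const_mul,
        intervalIntegral.integral_add (hI2.const_mul _) hI3,
        intervalIntegral.integral_const_mul]
    have hint1 : (∫ u in (0:ℝ)..1, x * u ^ (x-1)) = 1 := by
      rw [intervalIntegral.integral_const_mul,
        integral_rpow (Or.inl (by linarith : (-1:ℝ) < x - 1)),
        sub_add_cancel, Real.one_rpow, Real.zero_rpow hx0.ne', sub_zero]
      field_simp
    have hJ := J_bound hx hβ
    have hfin2 : x ^ (β+1) * (∫ u in (0:ℝ)..1, u ^ (x-1) * (1-u) ^ β) + 1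
        ≤ 2 ^ (β+1) * (Real.Gamma (β+1) + 1) + 1 := by linarith
    calc (∫ s in (0:ℝ)..1, s ^ x * ω s)
        = ∫ u in (0:ℝ)..1, x * u ^ (x-1) * tl ω u := hfub
      _ ≤ C' * W * (x ^ (β+1) * (∫ u in (0:ℝ)..1, u ^ (x-1) * (1-u) ^ β)
            + ∫ u in (0:ℝ)..1, x * u ^ (x-1)) := by rw [← hval]; exact hle1
      _ = C' * W * (x ^ (β+1) * (∫ u in (0:ℝ)..1, u ^ (x-1) * (1-u) ^ β) + 1) := by
            rw [hint1]
      _ ≤ C' * W * (2 ^ (β+1) * (Real.Gamma (β+1) + 1) + 1) := by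
            refine mul_le_mul_of_nonneg_left hfin2 hCW.le
      _ = C' * (2 ^ (β+1) * (Real.Gamma (β+1) + 1) + 1) * W := by ring
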